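/- Let H, T ≥ 1 be integers and M = HT, with blocks indexed m = Ht + h for t ∈ {0, …, T−1} and h ∈ {1, …, H}. For each block m ∈ {1, …, M} let Â_m, F_m : E → E with Â_m ρ_m-Lipschitz and F_m θ_m-Lipschitz (ρ_m, θ_m > 0), and let A_m : E → E satisfy ‖A_m X − Â_m X‖_F ≤ Σ_{n=1}^{N} σ_{m,n} for all X ∈ E (σ_{m,n} ≥ 0, N ≥ 1 participants). Starting from the same X^{emb} ∈ E, let the FedAttn trajectory apply block updates X ↦ X + A_m(X) + F_m(X + A_m(X)) at blocks with h ∈ {1, …, H−1} and X ↦ X + Â_m(X) + F_m(X + Â_m(X)) at blocks with h = H, and let the centralized trajectory apply X ↦ X + Â_m(X) + F_m(X + Â_m(X)) at every block. Denote by X^T and X^* the respective outputs after all M blocks. Then ‖X^T − X^*‖_F ≤ Σ_{t=0}^{T−1} Σ_{h=1}^{H−1} [(1+θ_{Ht+h})·Σ_{n=1}^{N} σ_{Ht+h,n}] · [∏_{i=h+1}^{H} (1+θ_{Ht+i})(1+ρ_{Ht+i})] · [∏_{j=t+1}^{T−1} ∏_{i=1}^{H} (1+θ_{Hj+i})(1+ρ_{Hj+i})].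 (Theorem 1 of the paper.) -/

import Mathlib

/-!
Statement 2 (Theorem 1 of the paper): approximation error between the FedAttn
trajectory and the centralized attention trajectory over `M = H * T` Transformer
blocks. Blocks are indexed `m = H*t + h` with `t ∈ {0,…,T−1}`, `h ∈ {1,…,H}`;
block `m` performs global self-attention iff `H ∣ m` (i.e. `h = H`).
`Xfed k` / `Xcen k` denote the hidden representations after the first `k` blocks.
`E` is the space of real `L × d` matrices with the Frobenius norm.
-/

attribute [local instance] Matrix.frobeniusNormedAddCommGroup

/-- product over a union of consecutive blocks of length `H`. -/
@[to_additive fedattn_sum_block]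
lemma fedattn_prod_block {M : Type*} [CommMonoid M] (f : ℕ → M) (H a : ℕ) :
    ∀ n : ℕ, ∏ j ∈ Finset.Ico a (a + n), ∏ i ∈ Finset.Ioc 0 H, f (H * j + i)
      = ∏ i ∈ Finset.Ioc (H * a) (H * (a + n)), f i := by
  intro n
  induction n with
  | zero => simp
  | succ n ih =>
    rw [← add_assoc, Finset.prod_Ico_succ_top (Nat.le_add_right _ _), ih]
    have h1 : H * a ≤ H * (a + n) := Nat.mul_le_mul_left _ (Nat.le_add_right _ _)
    have h2 : H * (a + n) ≤ H * (a + n + 1) := Nat.mul_le_mul_left _ (Nat.le_succ _)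
    rw [← Finset.prod_Ioc_consecutive f h1 h2]
    congr 1
    have hmap : Finset.Ioc (H * (a + n)) (H * (a + n + 1))
        = (Finset.Ioc 0 H).map (addLeftEmbedding (H * (a + n))) := by
      rw [Finset.map_add_left_Ioc]
      congr 1 <;> ring
    rw [hmap, Finset.prod_map]
    rfl

/-- shift a product over an `Ioc` interval. -/
lemma fedattn_prod_shift {M : Type*} [CommMonoid M] (f : ℕ → M) (c a b : ℕ) :
    ∏ i ∈ Finset.Ioc a b, f (c + i) = ∏ i ∈ Finset.Ioc (c + a) (c + b), f i := by
  rw [← Finset.map_add_left_Ioc, Finset.prod_map]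
  rfl

theorem fedattn_error_bound
    (L d : ℕ) (hL : 0 < L) (hd : 0 < d)
    (H T N : ℕ) (hH : 1 ≤ H) (hT : 1 ≤ T) (hN : 1 ≤ N)
    (A Ahat F : ℕ → Matrix (Fin L) (Fin d) ℝ → Matrix (Fin L) (Fin d) ℝ)
    (ρ θ : ℕ → ℝ) (σ : ℕ → ℕ → ℝ)
    (hρ : ∀ m ∈ Finset.Icc 1 (H * T), 0 < ρ m)
    (hθ : ∀ m ∈ Finset.Icc 1 (H * T), 0 < θ m)
    (hσ : ∀ m ∈ Finset.Icc 1 (H * T), ∀ n ∈ Finset.Icc 1 N, 0 ≤ σ m n)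
    (hAhat : ∀ m ∈ Finset.Icc 1 (H * T), ∀ X Y, ‖Ahat m X - Ahat m Y‖ ≤ ρ m * ‖X - Y‖)
    (hF : ∀ m ∈ Finset.Icc 1 (H * T), ∀ X Y, ‖F m X - F m Y‖ ≤ θ m * ‖X - Y‖)
    (hdev : ∀ m ∈ Finset.Icc 1 (H * T), ∀ X,
      ‖A m X - Ahat m X‖ ≤ ∑ n ∈ Finset.Icc 1 N, σ m n)
    (Xemb : Matrix (Fin L) (Fin d) ℝ)
    (Xfed Xcen : ℕ → Matrix (Fin L) (Fin d) ℝ)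
    (hfed0 : Xfed 0 = Xemb) (hcen0 : Xcen 0 = Xemb)
    (hfedLocal : ∀ m < H * T, ¬ H ∣ (m + 1) →
      Xfed (m + 1) =
        Xfed m + A (m + 1) (Xfed m) + F (m + 1) (Xfed m + A (m + 1) (Xfed m)))
    (hfedGlobal : ∀ m < H * T, H ∣ (m + 1) →
      Xfed (m + 1) =
        Xfed m + Ahat (m + 1) (Xfed m) + F (m + 1) (Xfed m + Ahat (m + 1) (Xfed m)))
    (hcen : ∀ m < H * T,
      Xcen (m + 1) =
        Xcen m + Ahat (m + 1) (Xcen m) + F (m + 1) (Xcen m + Ahat (m + 1) (Xcen m))) :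
    ‖Xfed (H * T) - Xcen (H * T)‖ ≤
      ∑ t ∈ Finset.range T, ∑ h ∈ Finset.Icc 1 (H - 1),
        ((1 + θ (H * t + h)) * ∑ n ∈ Finset.Icc 1 N, σ (H * t + h) n) *
          (∏ i ∈ Finset.Icc (h + 1) H, (1 + θ (H * t + i)) * (1 + ρ (H * t + i))) *
          (∏ j ∈ Finset.Icc (t + 1) (T - 1), ∏ i ∈ Finset.Icc 1 H,
            (1 + θ (H * j + i)) * (1 + ρ (H * j + i))) := by
  -- generic one-step bound
  have gen : ∀ p ∈ Finset.Icc 1 (H * T), ∀ (B : Matrix (Fin L) (Fin d) ℝ → Matrix (Fin L) (Fin d) ℝ)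
      (s : ℝ), 0 ≤ s → (∀ Z, ‖B Z - Ahat p Z‖ ≤ s) →
      ∀ X Y : Matrix (Fin L) (Fin d) ℝ,
      ‖(X + B X + F p (X + B X)) - (Y + Ahat p Y + F p (Y + Ahat p Y))‖ ≤
        (1 + θ p) * (1 + ρ p) * ‖X - Y‖ + (1 + θ p) * s := by
    intro p hp B s hs hB X Y
    have hθp := hθ p hp
    have hρp := hρ p hp
    have hu : ‖B X - Ahat p Y‖ ≤ s + ρ p * ‖X - Y‖ := by
      calc ‖B X - Ahat p Y‖ = ‖(B X - Ahat p X) + (Ahat p X - Ahat p Y)‖ := by abel_nf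
        _ ≤ ‖B X - Ahat p X‖ + ‖Ahat p X - Ahat p Y‖ := norm_add_le _ _
        _ ≤ s + ρ p * ‖X - Y‖ := add_le_add (hB X) (hAhat p hp X Y)
    have hFb : ‖F p (X + B X) - F p (Y + Ahat p Y)‖ ≤
        θ p * (‖X - Y‖ + (s + ρ p * ‖X - Y‖)) := by
      calc ‖F p (X + B X) - F p (Y + Ahat p Y)‖
          ≤ θ p * ‖(X + B X) - (Y + Ahat p Y)‖ := hF p hp _ _
        _ ≤ θ p * (‖X - Y‖ + (s + ρ p * ‖X - Y‖)) := by
            apply mul_le_mul_of_nonneg_left _ hθp.le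
            have h1 : (X + B X) - (Y + Ahat p Y) = (X - Y) + (B X - Ahat p Y) := by abel
            rw [h1]
            exact le_trans (norm_add_le _ _) (by linarith)
    have hkey : (X + B X + F p (X + B X)) - (Y + Ahat p Y + F p (Y + Ahat p Y))
        = ((X - Y) + (B X - Ahat p Y)) + (F p (X + B X) - F p (Y + Ahat p Y)) := by abel
    rw [hkey]
    have := norm_add_le ((X - Y) + (B X - Ahat p Y)) (F p (X + B X) - F p (Y + Ahat p Y))
    have h2 := norm_add_le (X - Y) (B X - Ahat p Y)
    nlinarith [norm_nonneg (X - Y)]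
  -- per-step recursive bound
  have step : ∀ m < H * T,
      ‖Xfed (m + 1) - Xcen (m + 1)‖ ≤
        (1 + θ (m + 1)) * (1 + ρ (m + 1)) * ‖Xfed m - Xcen m‖ +
        (if H ∣ (m + 1) then 0 else
          (1 + θ (m + 1)) * ∑ n ∈ Finset.Icc 1 N, σ (m + 1) n) := by
    intro m hm
    have hmem : m + 1 ∈ Finset.Icc 1 (H * T) := by
      simp only [Finset.mem_Icc]; omega
    by_cases hdvd : H ∣ (m + 1)
    · rw [if_pos hdvd, hfedGlobal m hm hdvd, hcen m hm]
      have := gen (m + 1) hmem (Ahat (m + 1)) 0 le_rfl (fun Z => by simp) (Xfed m) (Xcen m)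
      simpa using this
    · rw [if_neg hdvd, hfedLocal m hm hdvd, hcen m hm]
      have hsnn : 0 ≤ ∑ n ∈ Finset.Icc 1 N, σ (m + 1) n :=
        Finset.sum_nonneg fun n hn => hσ (m + 1) hmem n hn
      exact gen (m + 1) hmem (A (m + 1)) _ hsnn (hdev (m + 1) hmem) (Xfed m) (Xcen m)
  -- accumulated bound by induction
  have main : ∀ k, k ≤ H * T → ‖Xfed k - Xcen k‖ ≤
      ∑ m ∈ Finset.Ioc 0 k,
        (if H ∣ m then 0 else (1 + θ m) * ∑ n ∈ Finset.Icc 1 N, σ m n) *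
          ∏ i ∈ Finset.Ioc m k, (1 + θ i) * (1 + ρ i) := by
    intro k
    induction k with
    | zero => intro _; simp [hfed0, hcen0]
    | succ k ih =>
      intro hk
      have hk' : k ≤ H * T := by omega
      have hkmem : k + 1 ∈ Finset.Icc 1 (H * T) := by
        simp only [Finset.mem_Icc]; omega
      have hcnn : 0 ≤ (1 + θ (k + 1)) * (1 + ρ (k + 1)) := by
        have := hθ _ hkmem; have := hρ _ hkmem; nlinarith
      have hexp : ∑ m ∈ Finset.Ioc 0 (k + 1),
            (if H ∣ m then 0 else (1 + θ m) * ∑ n ∈ Finset.Icc 1 N, σ m n) *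
              ∏ i ∈ Finset.Ioc m (k + 1), (1 + θ i) * (1 + ρ i)
          = (1 + θ (k + 1)) * (1 + ρ (k + 1)) *
              ∑ m ∈ Finset.Ioc 0 k,
                (if H ∣ m then 0 else (1 + θ m) * ∑ n ∈ Finset.Icc 1 N, σ m n) *
                  ∏ i ∈ Finset.Ioc m k, (1 + θ i) * (1 + ρ i) +
            (if H ∣ (k + 1) then 0 else
              (1 + θ (k + 1)) * ∑ n ∈ Finset.Icc 1 N, σ (k + 1) n) := by
        rw [Finset.sum_Ioc_succ_top (Nat.zero_le _)]
        simp only [Finset.Ioc_self, Finset.prod_empty, mul_one]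
        congr 1
        rw [Finset.mul_sum]
        apply Finset.sum_congr rfl
        intro m hm
        rw [Finset.prod_Ioc_succ_top (Finset.mem_Ioc.mp hm).2]
        ring
      rw [hexp]
      have h1 := step k hk
      have h2 := mul_le_mul_of_nonneg_left (ih hk') hcnn
      linarith
  refine le_trans (main (H * T) le_rfl) (le_of_eq ?_)
  -- rewrite the accumulated sum as the double sum of the statement
  obtain ⟨H', rfl⟩ : ∃ H', H = H' + 1 := ⟨H - 1, by omega⟩
  set cc : ℕ → ℝ := fun i => (1 + θ i) * (1 + ρ i) with hcc
  set dd : ℕ → ℝ := fun m =>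
    (if (H' + 1) ∣ m then 0 else (1 + θ m) * ∑ n ∈ Finset.Icc 1 N, σ m n) with hdd
  have hblock := fedattn_sum_block
    (fun m => dd m * ∏ i ∈ Finset.Ioc m ((H' + 1) * T), cc i) (H' + 1) 0 T
  simp only [Nat.zero_add, Nat.mul_zero] at hblock
  rw [show (∑ m ∈ Finset.Ioc 0 ((H' + 1) * T),
      (if (H' + 1) ∣ m then 0 else (1 + θ m) * ∑ n ∈ Finset.Icc 1 N, σ m n) *
        ∏ i ∈ Finset.Ioc m ((H' + 1) * T), (1 + θ i) * (1 + ρ i)) =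
      ∑ m ∈ Finset.Ioc 0 ((H' + 1) * T),
        dd m * ∏ i ∈ Finset.Ioc m ((H' + 1) * T), cc i from rfl]
  rw [← hblock, Finset.range_eq_Ico]
  apply Finset.sum_congr rfl
  intro t ht
  have ht' : t < T := (Finset.mem_Ico.mp ht).2
  -- split off the top `i = H' + 1` term, which vanishes
  rw [Finset.sum_Ioc_succ_top (Nat.zero_le _)]
  have hdvdtop : (H' + 1) ∣ (H' + 1) * t + (H' + 1) := ⟨t + 1, by ring⟩
  have htopzero : dd ((H' + 1) * t + (H' + 1)) = 0 := by
    simp only [hdd, if_pos hdvdtop]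
  rw [htopzero, zero_mul, add_zero]
  rw [show Finset.Icc 1 (H' + 1 - 1) = Finset.Ioc 0 H' by
    rw [Nat.add_sub_cancel, ← Finset.Icc_add_one_left_eq_Ioc, zero_add]]
  apply Finset.sum_congr rfl
  intro h hh
  obtain ⟨hh1, hh2⟩ := Finset.mem_Ioc.mp hh
  -- no divisibility at local blocks
  have hnd : ¬ (H' + 1) ∣ ((H' + 1) * t + h) := by
    intro hcon
    have hmod : ((H' + 1) * t + h) % (H' + 1) = h := by
      rw [Nat.mul_add_mod]; exact Nat.mod_eq_of_lt (by omega)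
    have := Nat.dvd_iff_mod_eq_zero.mp hcon
    omega
  have hddval : dd ((H' + 1) * t + h)
      = (1 + θ ((H' + 1) * t + h)) * ∑ n ∈ Finset.Icc 1 N, σ ((H' + 1) * t + h) n := by
    simp only [hdd, if_neg hnd]
  rw [hddval]
  -- remaining: product reindexing
  have hprod : (∏ i ∈ Finset.Ioc ((H' + 1) * t + h) ((H' + 1) * T), cc i)
      = (∏ i ∈ Finset.Icc (h + 1) (H' + 1), cc ((H' + 1) * t + i)) *
        ∏ j ∈ Finset.Icc (t + 1) (T - 1), ∏ i ∈ Finset.Icc 1 (H' + 1), cc ((H' + 1) * j + i) := by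
    have e1 : Finset.Icc (h + 1) (H' + 1) = Finset.Ioc h (H' + 1) := Finset.Icc_add_one_left_eq_Ioc _ _
    have e2 : Finset.Icc 1 (H' + 1) = Finset.Ioc 0 (H' + 1) := Finset.Icc_add_one_left_eq_Ioc _ _
    have e3 : Finset.Icc (t + 1) (T - 1) = Finset.Ico (t + 1) T := by
      rw [← Finset.Ico_add_one_right_eq_Icc]
      congr 1
      omega
    rw [e1, e2, e3]
    have houter := fedattn_prod_block cc (H' + 1) (t + 1) (T - (t + 1))
    rw [show (t + 1) + (T - (t + 1)) = T by omega] at houter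
    rw [houter, fedattn_prod_shift cc ((H' + 1) * t) h (H' + 1)]
    rw [show (H' + 1) * t + (H' + 1) = (H' + 1) * (t + 1) by ring]
    exact (Finset.prod_Ioc_consecutive cc
      (by nlinarith : (H' + 1) * t + h ≤ (H' + 1) * (t + 1))
      (Nat.mul_le_mul_left _ (by omega))).symm
  rw [hprod]
  simp only [hcc]
  ring
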